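/- Let G be a group, B a G-invariant Boolean algebra of subsets of G satisfying the definability-of-types condition, S its Stone space, and K the kernel of the action of G on a minimal closed G-invariant subset M of S (the set of g fixing every point of M). Then K contains the intersection of all sets Y Y⁻¹ over left generic Y ∈ B. -/
import Mathlib

/-- The left translate `gY` of a subset of a group. -/
def LTrans {G : Type*} [Group G] (g : G) (Y : Set G) : Set G := (g * ·) '' Y

/-- `B` is a Boolean algebra of subsets of `G` closed under left translations. -/
def IsInvBoolAlg {G : Type*} [Group G] (B : Set (Set G)) : Prop :=
  Set.univ ∈ B ∧ (∀ Y ∈ B, Yᶜ ∈ B) ∧ (∀ Y ∈ B, ∀ Z ∈ B, Y ∩ Z ∈ B) ∧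
    ∀ (g : G), ∀ Y ∈ B, LTrans g Y ∈ B

/-- `p` is an ultrafilter on the Boolean algebra `B` of subsets. -/
def IsUltraOn {α : Type*} (B p : Set (Set α)) : Prop :=
  p ⊆ B ∧ Set.univ ∈ p ∧ ∅ ∉ p ∧ (∀ Y ∈ p, ∀ Z ∈ p, Y ∩ Z ∈ p) ∧
    (∀ Y ∈ p, ∀ Z ∈ B, Y ⊆ Z → Z ∈ p) ∧ ∀ Y ∈ B, Y ∈ p ∨ Yᶜ ∈ p

/-- `Y` is left generic: finitely many left translates of `Y` cover `G`. -/
def IsLeftGeneric {G : Type*} [Group G] (Y : Set G) : Prop :=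
  ∃ F : Finset G, ⋃ g ∈ F, LTrans g Y = Set.univ

/-- The set `Y · Y⁻¹ = {a b⁻¹ : a, b ∈ Y}`. -/
def MulInvSet {G : Type*} [Group G] (Y : Set G) : Set G :=
  {x | ∃ a ∈ Y, ∃ b ∈ Y, x = a * b⁻¹}

/-- The Stone space of the Boolean algebra `B`: the set of ultrafilters on `B`. -/
abbrev StoneS {α : Type*} (B : Set (Set α)) : Type _ := {p : Set (Set α) // IsUltraOn B p}

/-- The Stone topology, generated by the basic (cl)open sets `{p : Y ∈ p}`, `Y ∈ B`. -/
instance stoneTop {α : Type*} (B : Set (Set α)) : TopologicalSpace (StoneS B) :=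
  TopologicalSpace.generateFrom {U | ∃ Y ∈ B, U = {p : StoneS B | Y ∈ p.1}}

/-- The translation action of `G` on ultrafilters: `Y ∈ g·p ↔ g⁻¹Y ∈ p`. -/
def actUF {G : Type*} [Group G] (g : G) (p : Set (Set G)) : Set (Set G) :=
  {Y | LTrans g⁻¹ Y ∈ p}

/-- `M` is a `G`-subflow of the Stone space: nonempty, closed and `G`-invariant. -/
def IsSubflow {G : Type*} [Group G] (B : Set (Set G)) (M : Set (StoneS B)) : Prop :=
  M.Nonempty ∧ IsClosed M ∧ ∀ (g : G), ∀ q ∈ M, ∃ q' ∈ M, q'.1 = actUF g q.1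

/-- `M` is a minimal `G`-subflow of the Stone space. -/
def IsMinSubflow {G : Type*} [Group G] (B : Set (Set G)) (M : Set (StoneS B)) : Prop :=
  IsSubflow B M ∧ ∀ M' ⊆ M, IsSubflow B M' → M' = M

section Aux

variable {G : Type*} [Group G]

lemma mem_LTrans {g x : G} {Y : Set G} : x ∈ LTrans g Y ↔ g⁻¹ * x ∈ Y := by
  constructor
  · rintro ⟨a, ha, rfl⟩; simpa
  · intro h; exact ⟨g⁻¹ * x, h, by simp⟩

lemma LTrans_LTrans (g h : G) (Y : Set G) : LTrans g (LTrans h Y) = LTrans (g * h) Y := by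
  ext x; simp [mem_LTrans, mul_assoc]

lemma LTrans_one (Y : Set G) : LTrans (1 : G) Y = Y := by
  ext x; simp [mem_LTrans]

lemma LTrans_compl (g : G) (Y : Set G) : LTrans g Yᶜ = (LTrans g Y)ᶜ := by
  ext x; simp [mem_LTrans]

lemma LTrans_inter (g : G) (Y Z : Set G) : LTrans g (Y ∩ Z) = LTrans g Y ∩ LTrans g Z := by
  ext x; simp [mem_LTrans]

lemma LTrans_univ (g : G) : LTrans g (Set.univ : Set G) = Set.univ := by
  ext x; simp [mem_LTrans]

lemma LTrans_empty (g : G) : LTrans g (∅ : Set G) = ∅ := by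
  ext x; simp [mem_LTrans]

lemma LTrans_mono (g : G) {Y Z : Set G} (h : Y ⊆ Z) : LTrans g Y ⊆ LTrans g Z :=
  fun _ hx => mem_LTrans.2 (h (mem_LTrans.1 hx))

lemma mem_actUF {g : G} {p : Set (Set G)} {Y : Set G} :
    Y ∈ actUF g p ↔ LTrans g⁻¹ Y ∈ p := Iff.rfl

variable {B : Set (Set G)}

lemma ultra_act (hB : IsInvBoolAlg B) {p : Set (Set G)} (hp : IsUltraOn B p) (g : G) :
    IsUltraOn B (actUF g p) := by
  obtain ⟨hsub, huniv, hemp, hint, hup, hor⟩ := hp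
  obtain ⟨hBuniv, hBc, hBi, hBt⟩ := hB
  refine ⟨?_, ?_, ?_, ?_, ?_, ?_⟩
  · intro Y hY
    have h1 : LTrans g⁻¹ Y ∈ B := hsub hY
    have h2 := hBt g _ h1
    rwa [LTrans_LTrans, mul_inv_cancel, LTrans_one] at h2
  · show LTrans g⁻¹ Set.univ ∈ p; rwa [LTrans_univ]
  · show LTrans g⁻¹ (∅ : Set G) ∉ p; rwa [LTrans_empty]
  · intro Y hY Z hZ
    show LTrans g⁻¹ (Y ∩ Z) ∈ p
    rw [LTrans_inter]; exact hint _ hY _ hZ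
  · intro Y hY Z hZ hYZ
    exact hup _ hY _ (hBt g⁻¹ _ hZ) (LTrans_mono _ hYZ)
  · intro Y hY
    rcases hor _ (hBt g⁻¹ _ hY) with h | h
    · exact Or.inl h
    · right; show LTrans g⁻¹ Yᶜ ∈ p; rwa [LTrans_compl]

/-- The action of `g` as a map on the Stone space. -/
def sAct (hB : IsInvBoolAlg B) (g : G) (q : StoneS B) : StoneS B :=
  ⟨actUF g q.1, ultra_act hB q.2 g⟩

lemma sAct_one (hB : IsInvBoolAlg B) (q : StoneS B) : sAct hB 1 q = q := by
  apply Subtype.ext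
  ext Y
  show LTrans (1 : G)⁻¹ Y ∈ q.1 ↔ Y ∈ q.1
  rw [inv_one, LTrans_one]

lemma sAct_mul (hB : IsInvBoolAlg B) (g h : G) (q : StoneS B) :
    sAct hB g (sAct hB h q) = sAct hB (g * h) q := by
  apply Subtype.ext
  ext Y
  show LTrans h⁻¹ (LTrans g⁻¹ Y) ∈ q.1 ↔ LTrans (g * h)⁻¹ Y ∈ q.1
  rw [LTrans_LTrans, mul_inv_rev]

lemma isOpen_basic {Y : Set G} (hY : Y ∈ B) : IsOpen {p : StoneS B | Y ∈ p.1} :=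
  TopologicalSpace.GenerateOpen.basic _ ⟨Y, hY, rfl⟩

lemma continuous_sAct (hB : IsInvBoolAlg B) (g : G) : Continuous (sAct hB g) := by
  apply continuous_generateFrom_iff.2
  rintro s ⟨Y, hY, rfl⟩
  have : (sAct hB g) ⁻¹' {p : StoneS B | Y ∈ p.1} = {p : StoneS B | LTrans g⁻¹ Y ∈ p.1} := rfl
  rw [this]
  exact isOpen_basic (hB.2.2.2 g⁻¹ _ hY)

lemma subflow_mem (hB : IsInvBoolAlg B) {M : Set (StoneS B)} (hM : IsSubflow B M)
    (g : G) {q : StoneS B} (hq : q ∈ M) : sAct hB g q ∈ M := by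
  obtain ⟨q', hq', hval⟩ := hM.2.2 g q hq
  have : q' = sAct hB g q := Subtype.ext hval
  rwa [this] at hq'

lemma stone_compactSpace (hB : IsInvBoolAlg B) : CompactSpace (StoneS B) := by
  constructor
  rw [isCompact_iff_ultrafilter_le_nhds]
  intro f _
  set q : Set (Set G) := {Y | Y ∈ B ∧ {r : StoneS B | Y ∈ r.1} ∈ f} with hqdef
  have hq : IsUltraOn B q := by
    refine ⟨fun Y hY => hY.1, ⟨hB.1, ?_⟩, ?_, ?_, ?_, ?_⟩
    · have : {r : StoneS B | Set.univ ∈ r.1} = Set.univ :=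
        Set.eq_univ_of_forall fun r => r.2.2.1
      rw [this]; exact Filter.univ_mem
    · intro h
      have he : {r : StoneS B | (∅ : Set G) ∈ r.1} = ∅ :=
        Set.eq_empty_iff_forall_notMem.2 fun r hr => r.2.2.2.1 hr
      have := h.2
      rw [he] at this
      exact Filter.empty_notMem (f : Filter (StoneS B)) this
    · intro Y hY Z hZ
      refine ⟨hB.2.2.1 _ hY.1 _ hZ.1, ?_⟩
      exact Filter.mem_of_superset (Filter.inter_mem hY.2 hZ.2)
        (fun r hr => r.2.2.2.2.1 _ hr.1 _ hr.2)
    · intro Y hY Z hZ hYZ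
      exact ⟨hZ, Filter.mem_of_superset hY.2 (fun r hr => r.2.2.2.2.2.1 _ hr _ hZ hYZ)⟩
    · intro Y hY
      by_cases h : {r : StoneS B | Y ∈ r.1} ∈ f
      · exact Or.inl ⟨hY, h⟩
      · refine Or.inr ⟨hB.2.1 _ hY, ?_⟩
        have hc : ({r : StoneS B | Y ∈ r.1})ᶜ ∈ f := Ultrafilter.compl_mem_iff_notMem.2 h
        exact Filter.mem_of_superset hc
          (fun r hr => (r.2.2.2.2.2.2 _ hY).resolve_left hr)
  refine ⟨⟨q, hq⟩, trivial, ?_⟩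
  rw [TopologicalSpace.nhds_generateFrom]
  refine le_iInf fun U => le_iInf fun hU => ?_
  obtain ⟨hmem, Y, hY, rfl⟩ := hU
  exact Filter.le_principal_iff.2 hmem.2

lemma generic_of_mem (hB : IsInvBoolAlg B)
    {M : Set (StoneS B)} (hM : IsMinSubflow B M) {p : StoneS B} (hp : p ∈ M)
    {Z : Set G} (hZB : Z ∈ B) (hZp : Z ∈ p.1) :
    IsLeftGeneric {h : G | Z ∈ actUF h p.1} := by
  classical
  have step1 : ∀ q ∈ M, ∃ h : G, Z ∈ actUF h q.1 := by
    intro q hq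
    set N := closure (Set.range fun h : G => sAct hB h q) with hN
    have horb : Set.range (fun h : G => sAct hB h q) ⊆ M := by
      rintro _ ⟨h, rfl⟩; exact subflow_mem hB hM.1 h hq
    have hNM : N ⊆ M := closure_minimal horb hM.1.2.1
    have hNsub : IsSubflow B N := by
      refine ⟨⟨q, ?_⟩, isClosed_closure, ?_⟩
      · exact subset_closure ⟨1, sAct_one hB q⟩
      · intro g r hr
        refine ⟨sAct hB g r, ?_, rfl⟩
        have h0 : sAct hB g r ∈ (sAct hB g) '' N := ⟨r, hr, rfl⟩
        have h1 : (sAct hB g) '' N ⊆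
            closure ((sAct hB g) '' Set.range fun h : G => sAct hB h q) :=
          image_closure_subset_closure_image (continuous_sAct hB g)
        have h2 : (sAct hB g) '' (Set.range fun h : G => sAct hB h q) ⊆
            Set.range fun h : G => sAct hB h q := by
          rintro _ ⟨_, ⟨h, rfl⟩, rfl⟩
          exact ⟨g * h, (sAct_mul hB g h q).symm⟩
        exact closure_mono h2 (h1 h0)
    have hNeq : N = M := hM.2 N hNM hNsub
    have hpN : p ∈ N := hNeq ▸ hp
    rcases mem_closure_iff.1 hpN _ (isOpen_basic hZB) hZp with ⟨r, hrZ, hrange⟩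
    rcases hrange with ⟨h, rfl⟩
    exact ⟨h, hrZ⟩
  haveI := stone_compactSpace hB
  have hMc : IsCompact M := hM.1.2.1.isCompact
  have hcover : M ⊆ ⋃ h : G, {r : StoneS B | LTrans h⁻¹ Z ∈ r.1} := by
    intro q hq
    rcases step1 q hq with ⟨h, hh⟩
    exact Set.mem_iUnion.2 ⟨h, hh⟩
  obtain ⟨t, ht⟩ := hMc.elim_finite_subcover _
    (fun h : G => isOpen_basic (hB.2.2.2 h⁻¹ _ hZB)) hcover
  refine ⟨t.image (·⁻¹), Set.eq_univ_of_forall fun x => ?_⟩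
  have hxM : sAct hB x p ∈ M := subflow_mem hB hM.1 x hp
  rcases Set.mem_iUnion₂.1 (ht hxM) with ⟨h, hht, hmem⟩
  have hmem' : LTrans x⁻¹ (LTrans h⁻¹ Z) ∈ p.1 := hmem
  rw [LTrans_LTrans, ← mul_inv_rev] at hmem'
  refine Set.mem_iUnion₂.2 ⟨h⁻¹, Finset.mem_image.2 ⟨h, hht, rfl⟩, ?_⟩
  rw [mem_LTrans]
  simp only [inv_inv, Set.mem_setOf_eq]
  exact hmem'

end Aux

/-- The kernel of the action of `G` on a minimal subflow `M` of the Stone space of `B`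
contains the intersection of the sets `Y Y⁻¹` over all left generic `Y ∈ B`. -/
theorem stmt_18 {G : Type*} [Group G] (B : Set (Set G)) (hB : IsInvBoolAlg B)
    (hdef : ∀ p : StoneS B, ∀ Y ∈ B, {h : G | Y ∈ actUF h p.1} ∈ B)
    (M : Set (StoneS B)) (hM : IsMinSubflow B M) :
    (⋂ Y ∈ {Y : Set G | Y ∈ B ∧ IsLeftGeneric Y}, MulInvSet Y) ⊆
      {g : G | ∀ p ∈ M, actUF g p.1 = p.1} := by
  intro g hg p hp
  simp only [Set.mem_iInter, Set.mem_setOf_eq] at hg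
  -- main claim: everything in g·p is in p
  have claim1 : ∀ Y ∈ B, Y ∈ actUF g p.1 → Y ∈ p.1 := by
    intro Y hYB hYgp
    by_contra hYp
    have hYc : Yᶜ ∈ p.1 := (p.2.2.2.2.2.2 _ hYB).resolve_left hYp
    have hYt : LTrans g⁻¹ Y ∈ p.1 := hYgp
    set Z : Set G := Yᶜ ∩ LTrans g⁻¹ Y with hZdef
    have hZB : Z ∈ B := hB.2.2.1 _ (hB.2.1 _ hYB) _ (hB.2.2.2 g⁻¹ _ hYB)
    have hZp : Z ∈ p.1 := p.2.2.2.2.1 _ hYc _ hYt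
    have hDgen : IsLeftGeneric {h : G | Z ∈ actUF h p.1} :=
      generic_of_mem hB hM hp hZB hZp
    have hDB : {h : G | Z ∈ actUF h p.1} ∈ B := hdef p Z hZB
    have hgD := hg _ ⟨hDB, hDgen⟩
    obtain ⟨a, ha, b, hb, hab⟩ := hgD
    have ha' : LTrans a⁻¹ Z ∈ p.1 := ha
    have hb' : LTrans b⁻¹ Z ∈ p.1 := hb
    have hint : LTrans a⁻¹ Z ∩ LTrans b⁻¹ Z ∈ p.1 := p.2.2.2.2.1 _ ha' _ hb'
    have hne : (LTrans a⁻¹ Z ∩ LTrans b⁻¹ Z).Nonempty := by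
      rcases Set.eq_empty_or_nonempty (LTrans a⁻¹ Z ∩ LTrans b⁻¹ Z) with he | hne
      · rw [he] at hint; exact absurd hint p.2.2.2.1
      · exact hne
    obtain ⟨x, hx1, hx2⟩ := hne
    have hax : a * x ∈ Z := by rw [mem_LTrans, inv_inv] at hx1; exact hx1
    have hbx : b * x ∈ Z := by rw [mem_LTrans, inv_inv] at hx2; exact hx2
    have haxY : a * x ∉ Y := hax.1
    have hbxY : g * (b * x) ∈ Y := by
      have := hbx.2
      rw [mem_LTrans, inv_inv] at this
      exact this
    rw [hab] at hbxY
    have : a * x ∈ Y := by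
      have heq : a * b⁻¹ * (b * x) = a * x := by group
      rwa [heq] at hbxY
    exact haxY this
  -- converse direction
  have hgp : IsUltraOn B (actUF g p.1) := ultra_act hB p.2 g
  apply Set.Subset.antisymm
  · intro Y hY
    have hYB : Y ∈ B := hgp.1 hY
    exact claim1 Y hYB hY
  · intro Y hY
    have hYB : Y ∈ B := p.2.1 hY
    by_contra hYgp
    have hYc : Yᶜ ∈ actUF g p.1 := (hgp.2.2.2.2.2 _ hYB).resolve_left hYgp
    have hYcp : Yᶜ ∈ p.1 := claim1 _ (hB.2.1 _ hYB) hYc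
    have : Y ∩ Yᶜ ∈ p.1 := p.2.2.2.2.1 _ hY _ hYcp
    rw [Set.inter_compl_self] at this
    exact p.2.2.2.1 this
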